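/- Let μ, λ₁, λ₂ > 0. Then there exists Ē > 0, depending only on μ, λ₁, λ₂, such that for every x₀ ∈ ℝ with μ²x₀²/2 ≤ Ē and for each i ∈ {1, 2}, every twice differentiable solution ξ : ℝ → ℝ of the linearized equation ξ''(t) + (λᵢ² + x₀²·cos²(μt))·ξ(t) = 0 is bounded on ℝ. -/

import Mathlib

open Real Set

namespace StabilityCor2

/-- Solution predicate for `ξ'' = -(p·ξ)`. -/
structure IsSol (p ξ : ℝ → ℝ) : Prop where
  diff : Differentiable ℝ ξ
  diff2 : Differentiable ℝ (deriv ξ)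
  eqn : ∀ t, deriv (deriv ξ) t = -(p t * ξ t)

variable {p q ψ ξ η : ℝ → ℝ}

lemma IsSol.cont (h : IsSol p ξ) : Continuous ξ := h.diff.continuous

lemma deriv_combo (a b : ℝ) (hξ : Differentiable ℝ ξ) (hη : Differentiable ℝ η) :
    deriv (fun t => a * ξ t + b * η t) = fun t => a * deriv ξ t + b * deriv η t := by
  funext t
  rw [deriv_fun_add ((hξ t).const_mul a) ((hη t).const_mul b),
    deriv_const_mul a (hξ t), deriv_const_mul b (hη t)]

lemma IsSol.combo (hξ : IsSol p ξ) (hη : IsSol p η) (a b : ℝ) :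
    IsSol p (fun t => a * ξ t + b * η t) := by
  have hd : Differentiable ℝ (fun t => a * ξ t + b * η t) :=
    ((hξ.diff.const_mul a).add (hη.diff.const_mul b))
  have h1 : deriv (fun t => a * ξ t + b * η t) = fun t => a * deriv ξ t + b * deriv η t :=
    deriv_combo a b hξ.diff hη.diff
  have hd2 : Differentiable ℝ (deriv (fun t => a * ξ t + b * η t)) := by
    rw [h1]; exact (hξ.diff2.const_mul a).add (hη.diff2.const_mul b)
  refine ⟨hd, hd2, ?_⟩
  intro t
  rw [h1, deriv_combo a b hξ.diff2 hη.diff2]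
  show a * deriv (deriv ξ) t + b * deriv (deriv η) t = -(p t * (a * ξ t + b * η t))
  rw [hξ.eqn t, hη.eqn t]; ring

lemma IsSol.neg (hξ : IsSol p ξ) : IsSol p (fun t => -ξ t) := by
  have := hξ.combo hξ (-1) 0
  simpa using this

lemma IsSol.shift (hξ : IsSol p ξ) (c : ℝ) (hp : ∀ t, p (t + c) = p t) :
    IsSol p (fun t => ξ (t + c)) := by
  have hdc : Differentiable ℝ (fun t : ℝ => t + c) := differentiable_id.add_const c
  have h1 : deriv (fun t => ξ (t + c)) = fun t => deriv ξ (t + c) := by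
    funext t; exact deriv_comp_add_const ξ c t
  refine ⟨hξ.diff.comp hdc, ?_, ?_⟩
  · rw [h1]; exact hξ.diff2.comp hdc
  · intro t
    rw [h1, deriv_comp_add_const (deriv ξ) c t, hξ.eqn (t + c), hp t]

/-- Uniqueness: a solution vanishing to first order at a point is identically zero. -/
lemma IsSol.eq_zero (h : IsSol p ξ) {P : ℝ} (hP : ∀ t, |p t| ≤ P)
    (t₀ : ℝ) (h0 : ξ t₀ = 0) (h1 : deriv ξ t₀ = 0) : ∀ t, ξ t = 0 := by
  set E : ℝ → ℝ := fun t => ξ t ^ 2 + deriv ξ t ^ 2 with hE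
  set C : ℝ := 1 + P with hC
  have hP0 : 0 ≤ P := le_trans (abs_nonneg _) (hP 0)
  have hEderiv : ∀ t, HasDerivAt E (2 * ξ t * deriv ξ t * (1 - p t)) t := by
    intro t
    have hx : HasDerivAt ξ (deriv ξ t) t := (h.diff t).hasDerivAt
    have hx' : HasDerivAt (deriv ξ) (deriv (deriv ξ) t) t := (h.diff2 t).hasDerivAt
    have h2 : HasDerivAt (fun t => ξ t ^ 2) (2 * ξ t ^ 1 * deriv ξ t) t := hx.pow 2
    have h3 : HasDerivAt (fun t => deriv ξ t ^ 2)
        (2 * deriv ξ t ^ 1 * deriv (deriv ξ) t) t := hx'.pow 2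
    have hsum : HasDerivAt (fun t => ξ t ^ 2 + deriv ξ t ^ 2)
        (2 * ξ t ^ 1 * deriv ξ t + 2 * deriv ξ t ^ 1 * deriv (deriv ξ) t) t := h2.add h3
    have heq : (2:ℝ) * ξ t ^ 1 * deriv ξ t + 2 * deriv ξ t ^ 1 * deriv (deriv ξ) t
        = 2 * ξ t * deriv ξ t * (1 - p t) := by
      rw [h.eqn t]; ring
    rw [heq] at hsum
    rw [hE]
    exact hsum
  have hbound : ∀ t, |2 * ξ t * deriv ξ t * (1 - p t)| ≤ C * E t := by
    intro t
    have h2 : 2 * |ξ t * deriv ξ t| ≤ E t := by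
      have := sq_nonneg (|ξ t| - |deriv ξ t|)
      have habs : |ξ t * deriv ξ t| = |ξ t| * |deriv ξ t| := abs_mul _ _
      have : 2 * (|ξ t| * |deriv ξ t|) ≤ |ξ t|^2 + |deriv ξ t|^2 := by nlinarith
      simpa [habs, sq_abs, hE] using this
    have h3 : |1 - p t| ≤ C := by
      have := hP t
      rw [hC]
      cases' abs_le.1 this with hl hr
      rw [abs_le]; constructor <;> linarith
    calc |2 * ξ t * deriv ξ t * (1 - p t)|
        = 2 * |ξ t * deriv ξ t| * |1 - p t| := by
          rw [abs_mul]; rw [show (2:ℝ) * ξ t * deriv ξ t = 2 * (ξ t * deriv ξ t) by ring,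
            abs_mul]; simp [abs_of_nonneg]
      _ ≤ E t * C := by
          have hEnn : 0 ≤ E t := by positivity
          have h2' : 0 ≤ 2 * |ξ t * deriv ξ t| := by positivity
          have hCnn : 0 ≤ C := by rw [hC]; linarith
          exact mul_le_mul h2 h3 (abs_nonneg _) hEnn
      _ = C * E t := mul_comm _ _
  have hEnn : ∀ t, 0 ≤ E t := fun t => by positivity
  have hE0 : E t₀ = 0 := by simp [hE, h0, h1]
  -- forward: g = E * exp(-C t) is antitone
  have hEzero : ∀ t, E t = 0 := by
    intro t
    rcases le_or_gt t₀ t with hle | hlt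
    · -- forward
      have hg : ∀ s, HasDerivAt (fun u => E u * Real.exp (-C * u))
          ((2 * ξ s * deriv ξ s * (1 - p s)) * Real.exp (-C * s)
            + E s * (-C * Real.exp (-C * s))) s := by
        intro s
        have he : HasDerivAt (fun u => Real.exp (-C * u)) (-C * Real.exp (-C * s)) s := by
          have h0' : HasDerivAt (fun u : ℝ => -C * u) (-C) s := by
            simpa using (hasDerivAt_id s).const_mul (-C)
          have := h0'.exp
          simpa [mul_comm] using this
        exact (hEderiv s).mul he
      have hanti : Antitone (fun u => E u * Real.exp (-C * u)) := by
        apply antitone_of_deriv_nonpos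
        · intro s; exact (hg s).differentiableAt
        · intro s
          rw [(hg s).deriv]
          have hb := hbound s
          have hexp : 0 < Real.exp (-C * s) := Real.exp_pos _
          have h1' : 2 * ξ s * deriv ξ s * (1 - p s) ≤ C * E s := le_trans (le_abs_self _) hb
          nlinarith [hEnn s]
      have := hanti hle
      have hle2 : E t * Real.exp (-C * t) ≤ 0 := by
        simpa [hE0] using this
      have := mul_nonneg (hEnn t) (Real.exp_pos (-C * t)).le
      have hEt : E t * Real.exp (-C * t) = 0 := le_antisymm hle2 this
      have := Real.exp_pos (-C * t)
      rcases mul_eq_zero.1 hEt with h | h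
      · exact h
      · exact absurd h (ne_of_gt this)
    · -- backward
      have hg : ∀ s, HasDerivAt (fun u => E u * Real.exp (C * u))
          ((2 * ξ s * deriv ξ s * (1 - p s)) * Real.exp (C * s)
            + E s * (C * Real.exp (C * s))) s := by
        intro s
        have he : HasDerivAt (fun u => Real.exp (C * u)) (C * Real.exp (C * s)) s := by
          have h0' : HasDerivAt (fun u : ℝ => C * u) C s := by
            simpa using (hasDerivAt_id s).const_mul C
          have := h0'.exp
          simpa [mul_comm] using this
        exact (hEderiv s).mul he
      have hmono : Monotone (fun u => E u * Real.exp (C * u)) := by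
        apply monotone_of_deriv_nonneg
        · intro s; exact (hg s).differentiableAt
        · intro s
          rw [(hg s).deriv]
          have hb := hbound s
          have hexp : 0 < Real.exp (C * s) := Real.exp_pos _
          have h1' : -(C * E s) ≤ 2 * ξ s * deriv ξ s * (1 - p s) := neg_le_of_abs_le hb
          nlinarith [hEnn s]
      have := hmono hlt.le
      have hle2 : E t * Real.exp (C * t) ≤ 0 := by
        simpa [hE0] using this
      have hge := mul_nonneg (hEnn t) (Real.exp_pos (C * t)).le
      have hEt : E t * Real.exp (C * t) = 0 := le_antisymm hle2 hge
      rcases mul_eq_zero.1 hEt with h | h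
      · exact h
      · exact absurd h (ne_of_gt (Real.exp_pos _))
  intro t
  have ht := hEzero t
  rw [hE] at ht
  simp only [] at ht
  have h2 : ξ t ^ 2 = 0 := by nlinarith [sq_nonneg (ξ t), sq_nonneg (deriv ξ t)]
  exact pow_eq_zero_iff (by norm_num) |>.1 h2

variable {φ : ℝ → ℝ}

/-- Derivative of the Wronskian of solutions of two different equations. -/
lemma wronskian_hasDerivAt (hψ : IsSol p ψ) (hφ : IsSol q φ) (t : ℝ) :
    HasDerivAt (fun t => ψ t * deriv φ t - deriv ψ t * φ t)
      ((p t - q t) * (ψ t * φ t)) t := by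
  have h1 : HasDerivAt (fun t => ψ t * deriv φ t)
      (deriv ψ t * deriv φ t + ψ t * deriv (deriv φ) t) t :=
    ((hψ.diff t).hasDerivAt).mul ((hφ.diff2 t).hasDerivAt)
  have h2 : HasDerivAt (fun t => deriv ψ t * φ t)
      (deriv (deriv ψ) t * φ t + deriv ψ t * deriv φ t) t :=
    ((hψ.diff2 t).hasDerivAt).mul ((hφ.diff t).hasDerivAt)
  have h3 := h1.sub h2
  have heq : deriv ψ t * deriv φ t + ψ t * deriv (deriv φ) t
      - (deriv (deriv ψ) t * φ t + deriv ψ t * deriv φ t)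
      = (p t - q t) * (ψ t * φ t) := by
    rw [hψ.eqn t, hφ.eqn t]; ring
  rwa [heq] at h3

/-- `sin (c (t - a))` solves `y'' = -(c² y)`, with deriv `c cos (c (t-a))`. -/
lemma sin_deriv (c a : ℝ) :
    deriv (fun t => Real.sin (c * (t - a))) = fun t => c * Real.cos (c * (t - a)) := by
  funext t
  have h0 : HasDerivAt (fun t : ℝ => c * (t - a)) c t := by
    simpa using ((hasDerivAt_id t).sub_const a).const_mul c
  have := h0.sin
  rw [this.deriv]; ring

lemma isSol_sin (c a : ℝ) :
    IsSol (fun _ => c ^ 2) (fun t => Real.sin (c * (t - a))) := by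
  have hd : Differentiable ℝ (fun t : ℝ => c * (t - a)) :=
    (differentiable_id.sub_const a).const_mul c
  refine ⟨(Real.differentiable_sin).comp hd, ?_, ?_⟩
  · rw [sin_deriv]
    exact ((Real.differentiable_cos).comp hd).const_mul c
  · intro t
    have h0 : HasDerivAt (fun t : ℝ => c * (t - a)) c t := by
      simpa using ((hasDerivAt_id t).sub_const a).const_mul c
    have hc : HasDerivAt (fun t => c * Real.cos (c * (t - a)))
        (c * (-Real.sin (c * (t - a)) * c)) t := (h0.cos).const_mul c
    rw [sin_deriv, hc.deriv]
    ring

/-- Sturm: if `p ≥ lam² > 0` then any solution has a zero in every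
interval `[a, a + π/lam]`. -/
lemma exists_zero_of_le (hlam : 0 < lam) (hp : ∀ t, lam ^ 2 ≤ p t)
    (hψ : IsSol p ψ) (a : ℝ) : ∃ z ∈ Icc a (a + π / lam), ψ z = 0 := by
  by_contra hcon
  push_neg at hcon
  -- ψ has constant sign on the interval
  have hb : a < a + π / lam := by
    have : 0 < π / lam := div_pos Real.pi_pos hlam
    linarith
  -- reduce to the positive case
  have key : ∀ χ : ℝ → ℝ, IsSol p χ → (∀ t ∈ Icc a (a + π / lam), 0 < χ t) → False := by
    intro χ hχ hpos
    set φ : ℝ → ℝ := fun t => Real.sin (lam * (t - a)) with hφdef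
    set W : ℝ → ℝ := fun t => χ t * deriv φ t - deriv χ t * φ t with hWdef
    have hW : ∀ t, HasDerivAt W ((p t - lam ^ 2) * (χ t * φ t)) t := by
      intro t
      have := wronskian_hasDerivAt hχ (isSol_sin lam a) t
      exact this
    have hWmono : MonotoneOn W (Icc a (a + π / lam)) := by
      apply monotoneOn_of_deriv_nonneg (convex_Icc _ _)
      · exact (fun t _ => ((hW t).differentiableAt).continuousAt.continuousWithinAt)
      · intro t ht
        exact ((hW t).differentiableAt).differentiableWithinAt
      · intro t ht
        rw [(hW t).deriv]
        rw [interior_Icc] at ht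
        have hsin : 0 ≤ φ t := by
          rw [hφdef]
          apply Real.sin_nonneg_of_nonneg_of_le_pi
          · have := ht.1; nlinarith
          · have := ht.2
            have h2 : lam * (t - a) ≤ lam * (π / lam) := by nlinarith
            rwa [mul_div_cancel₀ _ (ne_of_gt hlam)] at h2
        have h1 : 0 ≤ p t - lam ^ 2 := by linarith [hp t]
        exact mul_nonneg h1 (mul_nonneg (hpos t (Ioo_subset_Icc_self ht)).le hsin)
    have hWa : W a = lam * χ a := by
      rw [hWdef]
      simp only [hφdef, sin_deriv]
      simp only [sub_self, mul_zero, Real.cos_zero, Real.sin_zero]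
      ring
    have hWb : W (a + π / lam) = -(lam * χ (a + π / lam)) := by
      have harg : lam * (a + π / lam - a) = π := by
        field_simp
        ring
      rw [hWdef]
      simp only [hφdef, sin_deriv]
      rw [harg, Real.cos_pi, Real.sin_pi]
      ring
    have h1 := hWmono (left_mem_Icc.2 hb.le) (right_mem_Icc.2 hb.le) hb.le
    rw [hWa, hWb] at h1
    have hca := hpos a (left_mem_Icc.2 hb.le)
    have hcb := hpos (a + π / lam) (right_mem_Icc.2 hb.le)
    nlinarith
  -- sign is constant by IVT
  have hne : ∀ t ∈ Icc a (a + π / lam), ψ t ≠ 0 := hcon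
  rcases lt_or_gt_of_ne (hne a (left_mem_Icc.2 hb.le)) with hneg | hpos
  · -- ψ a < 0 : apply key to -ψ; need -ψ > 0 on the interval
    apply key (fun t => -ψ t) hψ.neg
    intro t ht
    rcases lt_or_gt_of_ne (hne t ht) with h | h
    · linarith
    · -- ψ t > 0 but ψ a < 0: IVT gives a zero
      exfalso
      have hcont : ContinuousOn ψ (Icc a t) := hψ.diff.continuous.continuousOn
      have := intermediate_value_Icc ht.1 hcont
      have h0 : (0:ℝ) ∈ Icc (ψ a) (ψ t) := ⟨hneg.le, h.le⟩
      obtain ⟨z, hz, hz0⟩ := this h0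
      exact hne z ⟨hz.1, le_trans hz.2 ht.2⟩ hz0
  · apply key ψ hψ
    intro t ht
    rcases lt_or_gt_of_ne (hne t ht) with h | h
    · exfalso
      have hcont : ContinuousOn ψ (Icc a t) := hψ.diff.continuous.continuousOn
      have := intermediate_value_Icc' ht.1 hcont
      have h0 : (0:ℝ) ∈ Icc (ψ t) (ψ a) := ⟨h.le, hpos.le⟩
      obtain ⟨z, hz, hz0⟩ := this h0
      exact hne z ⟨hz.1, le_trans hz.2 ht.2⟩ hz0
    · exact h

/-- At a simple zero, the function is nonvanishing nearby. -/
lemma isolated_zero (hψ : IsSol p ψ) {z : ℝ} (hz : ψ z = 0) (hd : deriv ψ z ≠ 0) :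
    ∃ δ > 0, ∀ t, t ≠ z → |t - z| < δ → ψ t ≠ 0 := by
  have h1 : Filter.Tendsto (slope ψ z) (nhdsWithin z {z}ᶜ) (nhds (deriv ψ z)) :=
    hasDerivAt_iff_tendsto_slope.1 (hψ.diff z).hasDerivAt
  have h2 : ∀ᶠ t in nhdsWithin z {z}ᶜ, slope ψ z t ≠ 0 :=
    h1.eventually (eventually_ne_nhds hd)
  rw [eventually_nhdsWithin_iff, Metric.eventually_nhds_iff] at h2
  obtain ⟨δ, hδ, h3⟩ := h2
  refine ⟨δ, hδ, fun t ht hlt hψt => ?_⟩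
  have := h3 (show dist t z < δ by rwa [Real.dist_eq]) (by simpa using ht)
  apply this
  rw [slope_def_field, hψt, hz]
  simp

/-- Constant sign on an interval without zeros. -/
lemma sign_const (hc : Continuous ψ) {a b : ℝ}
    (hne : ∀ t ∈ Ioo a b, ψ t ≠ 0) :
    (∀ t ∈ Ioo a b, 0 < ψ t) ∨ (∀ t ∈ Ioo a b, ψ t < 0) := by
  by_contra h
  push_neg at h
  obtain ⟨⟨u, hu, hu0⟩, ⟨v, hv, hv0⟩⟩ := h
  have huneg : ψ u < 0 := lt_of_le_of_ne hu0 (hne u hu)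
  have hvpos : 0 < ψ v := lt_of_le_of_ne hv0 (Ne.symm (hne v hv))
  rcases lt_trichotomy u v with huv | huv | huv
  · obtain ⟨z, hz, hz0⟩ := intermediate_value_Icc huv.le hc.continuousOn ⟨huneg.le, hvpos.le⟩
    exact hne z ⟨lt_of_lt_of_le hu.1 hz.1, lt_of_le_of_lt hz.2 hv.2⟩ hz0
  · rw [huv] at huneg; linarith
  · obtain ⟨z, hz, hz0⟩ := intermediate_value_Icc' huv.le hc.continuousOn ⟨huneg.le, hvpos.le⟩
    exact hne z ⟨lt_of_lt_of_le hv.1 hz.1, lt_of_le_of_lt hz.2 hu.2⟩ hz0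

/-- Sturm: positive hump between consecutive zeros has length at least `π/β`
when `p ≤ β²`. -/
lemma gap_lower {β P : ℝ} (hβ : 0 < β) (hq : ∀ t, p t ≤ β ^ 2) (hP : ∀ t, |p t| ≤ P)
    (hψ : IsSol p ψ) {z₁ z₂ : ℝ} (h12 : z₁ < z₂) (hz1 : ψ z₁ = 0) (hz2 : ψ z₂ = 0)
    (hpos : ∀ t ∈ Ioo z₁ z₂, 0 < ψ t) : π / β ≤ z₂ - z₁ := by
  by_contra hcon
  push_neg at hcon
  have hβπ : (z₂ - z₁) * β < π := (lt_div_iff₀ hβ).1 hcon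
  set φ : ℝ → ℝ := fun t => Real.sin (β * (t - z₁)) with hφdef
  set W : ℝ → ℝ := fun t => ψ t * deriv φ t - deriv ψ t * φ t with hWdef
  have hW : ∀ t, HasDerivAt W ((p t - β ^ 2) * (ψ t * φ t)) t :=
    fun t => wronskian_hasDerivAt hψ (isSol_sin β z₁) t
  have hφIcc : ∀ t ∈ Icc z₁ z₂, 0 ≤ φ t := by
    intro t ht
    rw [hφdef]
    apply Real.sin_nonneg_of_nonneg_of_le_pi
    · nlinarith [ht.1]
    · nlinarith [ht.2, hβπ]
  have hψIcc : ∀ t ∈ Icc z₁ z₂, 0 ≤ ψ t := by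
    intro t ht
    rcases eq_or_lt_of_le ht.1 with h | h
    · rw [← h, hz1]
    rcases eq_or_lt_of_le ht.2 with h' | h'
    · rw [h', hz2]
    exact (hpos t ⟨h, h'⟩).le
  have hanti : AntitoneOn W (Icc z₁ z₂) := by
    apply antitoneOn_of_deriv_nonpos (convex_Icc _ _)
    · exact fun t _ => ((hW t).differentiableAt).continuousAt.continuousWithinAt
    · exact fun t _ => ((hW t).differentiableAt).differentiableWithinAt
    · intro t ht
      rw [interior_Icc] at ht
      rw [(hW t).deriv]
      have h1 : p t - β ^ 2 ≤ 0 := by linarith [hq t]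
      have h2 : 0 ≤ ψ t * φ t :=
        mul_nonneg (hψIcc t (Ioo_subset_Icc_self ht)) (hφIcc t (Ioo_subset_Icc_self ht))
      exact mul_nonpos_of_nonpos_of_nonneg h1 h2
  have hWz1 : W z₁ = 0 := by
    rw [hWdef]
    simp only [hφdef, sin_deriv, hz1]
    simp
  -- deriv ψ z₂ < 0
  have hd2ne : deriv ψ z₂ ≠ 0 := by
    intro h0
    have := hψ.eq_zero hP z₂ hz2 h0
    have hmid : (z₁ + z₂) / 2 ∈ Ioo z₁ z₂ := ⟨by linarith, by linarith⟩
    exact absurd (this ((z₁ + z₂)/2)) (ne_of_gt (hpos _ hmid))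
  have hd2le : deriv ψ z₂ ≤ 0 := by
    have h1 : Filter.Tendsto (slope ψ z₂) (nhdsWithin z₂ {z₂}ᶜ) (nhds (deriv ψ z₂)) :=
      hasDerivAt_iff_tendsto_slope.1 (hψ.diff z₂).hasDerivAt
    have hmono : nhdsWithin z₂ (Ioo z₁ z₂) ≤ nhdsWithin z₂ {z₂}ᶜ := by
      apply nhdsWithin_mono
      intro t ht
      exact ne_of_lt ht.2
    have h2 := h1.mono_left hmono
    have : (nhdsWithin z₂ (Ioo z₁ z₂)).NeBot := right_nhdsWithin_Ioo_neBot h12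
    apply le_of_tendsto h2
    apply eventually_nhdsWithin_of_forall
    intro t ht
    rw [slope_def_field, hz2]
    have h3 : ψ t > 0 := hpos t ht
    have h4 : t - z₂ < 0 := by linarith [ht.2]
    have h5 : (ψ t - 0) / (t - z₂) < 0 := div_neg_of_pos_of_neg (by linarith) h4
    linarith
  have hd2 : deriv ψ z₂ < 0 := lt_of_le_of_ne hd2le hd2ne
  have hφz2 : 0 < φ z₂ := by
    rw [hφdef]
    apply Real.sin_pos_of_pos_of_lt_pi
    · nlinarith
    · nlinarith [hβπ]
  have hWz2 : W z₂ = - deriv ψ z₂ * φ z₂ := by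
    rw [hWdef]
    simp only [hz2]
    ring
  have hle := hanti (left_mem_Icc.2 h12.le) (right_mem_Icc.2 h12.le) h12.le
  rw [hWz1, hWz2] at hle
  nlinarith

/-- Strict Sturm: a positive hump of length exactly `π/lam` is impossible if
`p ≥ lam²` with strict inequality somewhere inside. -/
lemma strict_sturm {lam : ℝ} (hlam : 0 < lam) (hp : ∀ t, lam ^ 2 ≤ p t)
    (hψ : IsSol p ψ) {z : ℝ} (hz1 : ψ z = 0) (hz2 : ψ (z + π / lam) = 0)
    (hpos : ∀ t ∈ Ioo z (z + π / lam), 0 < ψ t)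
    {t₀ : ℝ} (ht₀ : t₀ ∈ Ioo z (z + π / lam)) (hstrict : lam ^ 2 < p t₀) : False := by
  have hlen : 0 < π / lam := div_pos Real.pi_pos hlam
  set φ : ℝ → ℝ := fun t => Real.sin (lam * (t - z)) with hφdef
  set W : ℝ → ℝ := fun t => ψ t * deriv φ t - deriv ψ t * φ t with hWdef
  have hW : ∀ t, HasDerivAt W ((p t - lam ^ 2) * (ψ t * φ t)) t :=
    fun t => wronskian_hasDerivAt hψ (isSol_sin lam z) t
  have hφIcc : ∀ t ∈ Icc z (z + π / lam), 0 ≤ φ t := by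
    intro t ht
    rw [hφdef]
    apply Real.sin_nonneg_of_nonneg_of_le_pi
    · nlinarith [ht.1]
    · have := ht.2
      have h2 : lam * (t - z) ≤ lam * (π / lam) := by nlinarith
      rwa [mul_div_cancel₀ _ (ne_of_gt hlam)] at h2
  have hψIcc : ∀ t ∈ Icc z (z + π / lam), 0 ≤ ψ t := by
    intro t ht
    rcases eq_or_lt_of_le ht.1 with h | h
    · rw [← h, hz1]
    rcases eq_or_lt_of_le ht.2 with h' | h'
    · rw [h', hz2]
    exact (hpos t ⟨h, h'⟩).le
  have hmono : MonotoneOn W (Icc z (z + π / lam)) := by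
    apply monotoneOn_of_deriv_nonneg (convex_Icc _ _)
    · exact fun t _ => ((hW t).differentiableAt).continuousAt.continuousWithinAt
    · exact fun t _ => ((hW t).differentiableAt).differentiableWithinAt
    · intro t ht
      rw [interior_Icc] at ht
      rw [(hW t).deriv]
      have h1 : 0 ≤ p t - lam ^ 2 := by linarith [hp t]
      exact mul_nonneg h1 (mul_nonneg (hψIcc t (Ioo_subset_Icc_self ht))
        (hφIcc t (Ioo_subset_Icc_self ht)))
  have hWz : W z = 0 := by
    rw [hWdef]
    simp only [hφdef, sin_deriv, hz1]
    simp
  have hWend : W (z + π / lam) = 0 := by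
    have harg : lam * (z + π / lam - z) = π := by
      field_simp
      ring
    rw [hWdef]
    simp only [hφdef, sin_deriv, hz2, harg, Real.sin_pi]
    simp
  have hconst : ∀ t ∈ Icc z (z + π / lam), W t = 0 := by
    intro t ht
    have h1 := hmono (left_mem_Icc.2 (by linarith)) ht ht.1
    have h2 := hmono ht (right_mem_Icc.2 (by linarith)) ht.2
    rw [hWz] at h1
    rw [hWend] at h2
    linarith
  have hev : W =ᶠ[nhds t₀] (fun _ => (0:ℝ)) := by
    apply Filter.eventuallyEq_of_mem (Ioo_mem_nhds ht₀.1 ht₀.2)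
    intro t ht
    exact hconst t (Ioo_subset_Icc_self ht)
  have hd0 : deriv W t₀ = 0 := by
    rw [hev.deriv_eq]
    simp
  have hval := (hW t₀).deriv
  rw [hd0] at hval
  have hψpos := hpos t₀ ht₀
  have hφpos : 0 < φ t₀ := by
    rw [hφdef]
    apply Real.sin_pos_of_pos_of_lt_pi
    · nlinarith [ht₀.1]
    · have := ht₀.2
      have h2 : lam * (t₀ - z) < lam * (π / lam) := by nlinarith
      rwa [mul_div_cancel₀ _ (ne_of_gt hlam)] at h2
  have h5 : 0 < (p t₀ - lam ^ 2) * (ψ t₀ * φ t₀) :=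
    mul_pos (by linarith) (mul_pos hψpos hφpos)
  linarith


/-- In any interval of length `π/lam` (with `lam = nμ`, `n ≥ 1`) there is a point
where `cos (μ t) ≠ 0`. -/
lemma exists_cos_ne {μ lam : ℝ} (hμ : 0 < μ) (hlam : 0 < lam) {n : ℕ} (hn1 : 1 ≤ n)
    (hlamn : lam = (n : ℝ) * μ) (z0 : ℝ) :
    ∃ ts ∈ Ioo z0 (z0 + π / lam), Real.cos (μ * ts) ≠ 0 := by
  have hπ : (0:ℝ) < π := Real.pi_pos
  have hlen : 0 < π / lam := div_pos hπ hlam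
  set ta : ℝ := z0 + (π / lam) / 3 with htadef
  set tb : ℝ := z0 + 2 * (π / lam) / 3 with htbdef
  have hta : ta ∈ Ioo z0 (z0 + π / lam) := ⟨by rw [htadef]; linarith, by rw [htadef]; linarith⟩
  have htb : tb ∈ Ioo z0 (z0 + π / lam) := ⟨by rw [htbdef]; linarith, by rw [htbdef]; linarith⟩
  have hnpos : (0:ℝ) < (n:ℝ) := by exact_mod_cast hn1
  have hcos : Real.cos (μ * ta) ≠ 0 ∨ Real.cos (μ * tb) ≠ 0 := by
    by_contra hc
    push_neg at hc
    obtain ⟨ha, hb⟩ := hc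
    obtain ⟨ka, hka⟩ := Real.cos_eq_zero_iff.1 ha
    obtain ⟨kb, hkb⟩ := Real.cos_eq_zero_iff.1 hb
    have hdiff : μ * tb - μ * ta = ((kb : ℝ) - ka) * π := by
      rw [hka, hkb]; ring
    have hd2 : μ * (tb - ta) = μ * (π / lam) / 3 := by
      rw [htadef, htbdef]; ring
    have hval : μ * (π / lam) / 3 = π / (3 * n) := by
      rw [hlamn]
      have hn0 : (n:ℝ) ≠ 0 := by positivity
      field_simp
    have heq : ((kb : ℝ) - ka) * π = π / (3 * n) := by
      rw [← hval, ← hd2]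
      rw [← hdiff]; ring
    have hlt1 : π / (3 * n) < π := by
      rw [div_lt_iff₀ (by positivity)]
      have hn1' : (1:ℝ) ≤ n := by exact_mod_cast hn1
      have h31 : (1:ℝ) < 3 * n := by linarith
      nlinarith
    have hgt0 : 0 < π / (3 * n) := by positivity
    set d : ℤ := kb - ka with hddef
    have hd : (d : ℝ) * π = π / (3 * n) := by
      rw [hddef]; push_cast; rw [← heq]
    have hd0 : (0:ℝ) < (d:ℝ) := by
      by_contra hcc
      push_neg at hcc
      nlinarith
    have hd1 : (d:ℝ) < 1 := by
      by_contra hcc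
      push_neg at hcc
      nlinarith
    have hi0 : (0:ℤ) < d := by exact_mod_cast hd0
    have hi1 : d < 1 := by exact_mod_cast hd1
    omega
  rcases hcos with h | h
  · exact ⟨ta, hta, h⟩
  · exact ⟨tb, htb, h⟩

/-- The key lemma: for small `x₀ ≠ 0` there is no nontrivial Floquet solution with a
real multiplier for the Mathieu equation. -/
lemma no_floquet {μ lam x₀ : ℝ} (hμ : 0 < μ) (hlam : 0 < lam) (hx : x₀ ≠ 0)
    (hsmall : lam ^ 2 + x₀ ^ 2 < μ ^ 2 * ((⌊lam / μ⌋₊ : ℝ) + 1) ^ 2)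
    {ψ : ℝ → ℝ} (hψ : IsSol (fun t => lam ^ 2 + x₀ ^ 2 * Real.cos (μ * t) ^ 2) ψ)
    {ρ : ℝ} (hρ0 : ρ ≠ 0) (hflo : ∀ t, ψ (t + π / μ) = ρ * ψ t)
    (hnt : ∃ t₁, ψ t₁ ≠ 0) : False := by
  classical
  set p : ℝ → ℝ := fun t => lam ^ 2 + x₀ ^ 2 * Real.cos (μ * t) ^ 2 with hpdef
  set T : ℝ := π / μ with hTdef
  have hT : 0 < T := div_pos Real.pi_pos hμ
  set β : ℝ := Real.sqrt (lam ^ 2 + x₀ ^ 2) with hβdef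
  have hβsq : β ^ 2 = lam ^ 2 + x₀ ^ 2 := Real.sq_sqrt (by positivity)
  have hβpos : 0 < β := Real.sqrt_pos.2 (by positivity)
  have hlamβ : lam ≤ β := by nlinarith [sq_nonneg x₀]
  have hpge : ∀ t, lam ^ 2 ≤ p t := by
    intro t; rw [hpdef]
    have : 0 ≤ x₀ ^ 2 * Real.cos (μ * t) ^ 2 := by positivity
    simp only []; linarith
  have hple : ∀ t, p t ≤ β ^ 2 := by
    intro t; rw [hpdef, hβsq]
    have h1 : Real.cos (μ * t) ^ 2 ≤ 1 := Real.cos_sq_le_one _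
    have h2 : x₀ ^ 2 * Real.cos (μ * t) ^ 2 ≤ x₀ ^ 2 := by nlinarith [sq_nonneg x₀]
    simp only []; linarith
  have hP : ∀ t, |p t| ≤ β ^ 2 := by
    intro t
    rw [abs_of_nonneg (le_trans (by positivity) (hpge t))]
    exact hple t
  -- all zeros are simple
  have hsimp : ∀ z, ψ z = 0 → deriv ψ z ≠ 0 := by
    intro z hz hd
    obtain ⟨t₁, ht₁⟩ := hnt
    exact ht₁ (hψ.eq_zero hP z hz hd t₁)
  -- zero set is T-periodic
  have hper : ∀ t, ψ t = 0 → ψ (t + T) = 0 := by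
    intro t ht
    rw [hTdef, hflo t, ht, mul_zero]
  -- the next-zero package
  have next_spec : ∀ z, ψ z = 0 → ∃ w, ψ w = 0 ∧ z < w ∧ w ≤ z + π / lam ∧
      π / β ≤ w - z ∧ ∀ t ∈ Ioo z w, ψ t ≠ 0 := by
    intro z hz
    obtain ⟨δ, hδ, hiso⟩ := isolated_zero hψ hz (hsimp z hz)
    have hnozero_near : ∀ t, ψ t = 0 → z < t → z + δ ≤ t := by
      intro t ht hzt
      by_contra hc
      push_neg at hc
      exact hiso t (ne_of_gt hzt) (by rw [abs_of_pos (by linarith)]; linarith) ht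
    set S : Set ℝ := {t | ψ t = 0} ∩ Ici (z + δ) with hSdef
    have hSclosed : IsClosed S :=
      (isClosed_eq hψ.cont continuous_const).inter isClosed_Ici
    have hSne : S.Nonempty := by
      obtain ⟨w, hw, hw0⟩ := exists_zero_of_le hlam hpge hψ (z + δ)
      exact ⟨w, hw0, hw.1⟩
    have hSbdd : BddBelow S := ⟨z + δ, fun t ht => ht.2⟩
    set w : ℝ := sInf S with hwdef
    have hwS : w ∈ S := hSclosed.csInf_mem hSne hSbdd
    have hw0 : ψ w = 0 := hwS.1
    have hzw : z < w := lt_of_lt_of_le (by linarith) hwS.2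
    have hmin : ∀ t, ψ t = 0 → z < t → w ≤ t := by
      intro t ht hzt
      exact csInf_le hSbdd ⟨ht, hnozero_near t ht hzt⟩
    have hnone : ∀ t ∈ Ioo z w, ψ t ≠ 0 := by
      intro t ht htz
      exact absurd (hmin t htz ht.1) (not_le.2 ht.2)
    have hwle : w ≤ z + π / lam := by
      by_contra hc
      push_neg at hc
      set ε : ℝ := min δ (w - (z + π / lam)) with hεdef
      have hε : 0 < ε := lt_min hδ (by linarith)
      obtain ⟨w', hw', hw'0⟩ := exists_zero_of_le hlam hpge hψ (z + ε / 2)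
      have h1 : z < w' := lt_of_lt_of_le (by linarith) hw'.1
      have h2 : w' < w := by
        have := hw'.2
        have hεle : ε ≤ w - (z + π / lam) := min_le_right _ _
        linarith
      exact hnone w' ⟨h1, h2⟩ hw'0
    have hgap : π / β ≤ w - z := by
      rcases sign_const hψ.cont hnone with hq | hq
      · exact gap_lower hβpos hple hP hψ hzw hz hw0 hq
      · have hneg := hψ.neg
        apply gap_lower hβpos hple hP hneg hzw (by simp [hz]) (by simp [hw0])
        intro t ht
        show (0:ℝ) < -ψ t
        linarith [hq t ht]
    exact ⟨w, hw0, hzw, hwle, hgap, hnone⟩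
  choose nxt hn0 hngt hnle hngap hnne using next_spec
  -- a starting zero
  obtain ⟨z0, _, hz0⟩ := exists_zero_of_le hlam hpge hψ 0
  -- the zero sequence
  set seq : ℕ → ℝ := fun k =>
    Nat.rec z0 (fun _ w => if h : ψ w = 0 then nxt w h else w + 1) k with hseqdef
  have hseq0 : seq 0 = z0 := rfl
  have hseqz : ∀ k, ψ (seq k) = 0 := by
    intro k
    induction k with
    | zero => exact hz0
    | succ k ih =>
      show ψ (if h : ψ (seq k) = 0 then nxt (seq k) h else seq k + 1) = 0
      rw [dif_pos ih]
      exact hn0 _ ih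
  have hseqS : ∀ k, seq (k + 1) = nxt (seq k) (hseqz k) := by
    intro k
    show (if h : ψ (seq k) = 0 then nxt (seq k) h else seq k + 1) = _
    rw [dif_pos (hseqz k)]
  have hgub : ∀ k, seq (k + 1) - seq k ≤ π / lam := by
    intro k; rw [hseqS k]
    have := hnle (seq k) (hseqz k)
    linarith
  have hglb : ∀ k, π / β ≤ seq (k + 1) - seq k := by
    intro k; rw [hseqS k]; exact hngap _ _
  have hnonek : ∀ k, ∀ t ∈ Ioo (seq k) (seq (k + 1)), ψ t ≠ 0 := by
    intro k; rw [hseqS k]; exact hnne _ _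
  have hgrow : ∀ k : ℕ, z0 + k * (π / β) ≤ seq k := by
    intro k
    induction k with
    | zero => rw [hseq0]; norm_num
    | succ k ih =>
      have := hglb k
      push_cast
      linarith
  -- find m with seq m = z0 + T
  have hzT : ψ (z0 + T) = 0 := hper z0 hz0
  have hex : ∃ k, z0 + T ≤ seq k := by
    obtain ⟨k, hk⟩ := exists_nat_ge (T / (π / β))
    refine ⟨k, ?_⟩
    have hπβ : 0 < π / β := div_pos Real.pi_pos hβpos
    have : T ≤ k * (π / β) := by
      rw [div_le_iff₀ hπβ] at hk
      linarith
    linarith [hgrow k]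
  set m : ℕ := Nat.find hex with hmdef
  have hm : z0 + T ≤ seq m := Nat.find_spec hex
  have hmne : m ≠ 0 := by
    intro h0
    rw [h0, hseq0] at hm
    linarith
  obtain ⟨j, hj⟩ : ∃ j, m = j + 1 := ⟨m - 1, (Nat.succ_pred_eq_of_pos (Nat.pos_of_ne_zero hmne)).symm⟩
  have hjlt : seq j < z0 + T := by
    have := Nat.find_min hex (m := j) (by omega)
    linarith [not_le.1 this]
  have hseqm : seq m = z0 + T := by
    rcases eq_or_lt_of_le hm with h | h
    · exact h.symm
    · exfalso
      refine hnonek j (z0 + T) ⟨hjlt, ?_⟩ hzT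
      rw [← hj]; exact h
  -- telescoping
  have htele : (Finset.range m).sum (fun i => seq (i + 1) - seq i) = T := by
    rw [Finset.sum_range_sub (fun i => seq i) m, hseqm, hseq0]
    ring
  have hub : T ≤ (m : ℝ) * (π / lam) := by
    rw [← htele]
    calc (Finset.range m).sum (fun i => seq (i + 1) - seq i)
        ≤ (Finset.range m).sum (fun _ => π / lam) :=
          Finset.sum_le_sum (fun i _ => hgub i)
      _ = (m : ℝ) * (π / lam) := by
          rw [Finset.sum_const, Finset.card_range]; simp [nsmul_eq_mul]
  have hlb : (m : ℝ) * (π / β) ≤ T := by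
    rw [← htele]
    calc (m : ℝ) * (π / β) = (Finset.range m).sum (fun _ => π / β) := by
          rw [Finset.sum_const, Finset.card_range]; simp [nsmul_eq_mul]
      _ ≤ (Finset.range m).sum (fun i => seq (i + 1) - seq i) :=
          Finset.sum_le_sum (fun i _ => hglb i)
  -- arithmetic: m = n and lam = n μ
  set n : ℕ := ⌊lam / μ⌋₊ with hndef
  have hπ : (0:ℝ) < π := Real.pi_pos
  rw [hTdef] at hub hlb
  have h1 : lam / μ ≤ (m : ℝ) := by
    rw [div_le_iff₀ hμ]
    by_contra hc
    push_neg at hc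
    have e1 : (m:ℝ) * (π / lam) * (lam * μ) = (m:ℝ) * μ * π := by field_simp
    have e2 : (π / μ) * (lam * μ) = lam * π := by field_simp
    have h3 := mul_le_mul_of_nonneg_right hub (le_of_lt (mul_pos hlam hμ))
    have h4 := mul_lt_mul_of_pos_right hc hπ
    linarith
  have h2 : (m : ℝ) ≤ β / μ := by
    rw [le_div_iff₀ hμ]
    by_contra hc
    push_neg at hc
    have e1 : (m:ℝ) * (π / β) * (β * μ) = (m:ℝ) * μ * π := by field_simp
    have e2 : (π / μ) * (β * μ) = β * π := by field_simp
    have h3 := mul_le_mul_of_nonneg_right hlb (le_of_lt (mul_pos hβpos hμ))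
    have h4 := mul_lt_mul_of_pos_right hc hπ
    linarith
  have h3 : β / μ < (n : ℝ) + 1 := by
    rw [div_lt_iff₀ hμ]
    by_contra hc
    push_neg at hc
    have hsq : ((n:ℝ)+1) * μ * (((n:ℝ)+1) * μ) ≤ β * β :=
      mul_self_le_mul_self (by positivity) hc
    nlinarith [hβsq]
  have h4 : (n : ℝ) ≤ lam / μ := Nat.floor_le (by positivity)
  have hmn : m = n := by
    have hlt : (m : ℝ) < (n : ℝ) + 1 := lt_of_le_of_lt h2 h3
    have hge : (n : ℝ) ≤ (m : ℝ) := le_trans h4 h1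
    have h5 : m < n + 1 := by exact_mod_cast hlt
    have h6 : n ≤ m := by exact_mod_cast hge
    omega
  have hlamn : lam = (n : ℝ) * μ := by
    have hmn' : (m:ℝ) = (n:ℝ) := by exact_mod_cast hmn
    have h5 : lam / μ = (n:ℝ) := le_antisymm (by rw [← hmn']; exact h1) h4
    rw [div_eq_iff (ne_of_gt hμ)] at h5
    linarith
  have hn1 : 1 ≤ n := by
    rw [← hmn]
    exact Nat.pos_of_ne_zero hmne
  -- all gaps are exactly π / lam
  have hsum0 : (Finset.range m).sum (fun i => π / lam - (seq (i + 1) - seq i)) = 0 := by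
    rw [Finset.sum_sub_distrib, htele, Finset.sum_const, Finset.card_range, nsmul_eq_mul]
    rw [hTdef, hmn, hlamn]
    field_simp
    ring
  have hall : ∀ i ∈ Finset.range m, π / lam - (seq (i + 1) - seq i) = 0 := by
    rw [← Finset.sum_eq_zero_iff_of_nonneg (fun i _ => by linarith [hgub i])]
    exact hsum0
  have hm0 : 0 ∈ Finset.range m := Finset.mem_range.2 (by omega)
  have hgap0 : seq 1 = seq 0 + π / lam := by
    have := hall 0 hm0
    linarith
  -- find a point in the first gap where cos (μ t) ≠ 0
  obtain ⟨ts, hts, hcts⟩ := exists_cos_ne hμ hlam hn1 hlamn z0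
  have hstr : lam ^ 2 < p ts := by
    rw [hpdef]
    simp only []
    have : 0 < x₀ ^ 2 * Real.cos (μ * ts) ^ 2 := by positivity
    linarith
  -- first gap has no zeros, constant sign
  have hz1 : ψ (z0 + π / lam) = 0 := by
    have := hseqz 1
    rwa [hgap0, hseq0] at this
  have hne01 : ∀ t ∈ Ioo z0 (z0 + π / lam), ψ t ≠ 0 := by
    intro t ht
    have h2 := hnonek 0
    rw [show (0:ℕ)+1 = 1 from rfl, hgap0, hseq0] at h2
    exact h2 t ht
  rcases sign_const hψ.cont hne01 with hq | hq
  · exact strict_sturm hlam hpge hψ hz0 hz1 hq hts hstr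
  · apply strict_sturm hlam hpge hψ.neg (by simp [hz0]) (by simp [hz1]) ?_ hts hstr
    intro t ht
    show (0:ℝ) < -ψ t
    linarith [hq t ht]

/-- A continuous function satisfying `ξ(t+2T) = b ξ(t+T) - ξ(t)` with `b² < 4`
is bounded. -/
lemma bounded_of_rec {ξ : ℝ → ℝ} (hcont : Continuous ξ) {T b : ℝ} (hT : 0 < T)
    (hb : b ^ 2 < 4) (hrec : ∀ t, ξ (t + 2 * T) = b * ξ (t + T) - ξ t) :
    ∃ C : ℝ, ∀ t, |ξ t| ≤ C := by
  have hb2a : -1 < b / 2 := by nlinarith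
  have hb2b : b / 2 < 1 := by nlinarith
  set φ : ℝ := Real.arccos (b / 2) with hφdef
  have hcosφ : Real.cos φ = b / 2 := Real.cos_arccos (by linarith) (by linarith)
  have hsinφ : 0 < Real.sin φ := by
    rw [hφdef, Real.sin_arccos]
    apply Real.sqrt_pos.2
    nlinarith
  have trig : ∀ x : ℝ, Real.sin (x + φ) + Real.sin (x - φ) = b * Real.sin x := by
    intro x
    rw [Real.sin_add, Real.sin_sub, hcosφ]
    ring
  have key : ∀ (s : ℝ) (k : ℤ), ξ (s + k * T) * Real.sin φ
      = Real.sin (k * φ) * ξ (s + T) - Real.sin ((k - 1) * φ) * ξ s := by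
    intro s
    have hurec : ∀ x : ℝ, ξ (s + (x + 2) * T) = b * ξ (s + (x + 1) * T) - ξ (s + x * T) := by
      intro x
      have h1 := hrec (s + x * T)
      have e2 : s + (x + 2) * T = (s + x * T) + 2 * T := by ring
      have e1 : s + (x + 1) * T = (s + x * T) + T := by ring
      rw [e2, e1, h1]
    have main : ∀ k : ℤ,
        (ξ (s + k * T) * Real.sin φ
          = Real.sin (k * φ) * ξ (s + T) - Real.sin ((k - 1) * φ) * ξ s) ∧
        (ξ (s + (k + 1) * T) * Real.sin φ
          = Real.sin ((k + 1) * φ) * ξ (s + T) - Real.sin (k * φ) * ξ s) := by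
      intro k
      induction k using Int.induction_on with
      | zero =>
        constructor
        · push_cast
          rw [show (0:ℝ) * T = 0 by ring, show (0:ℝ) * φ = 0 by ring,
            show ((0:ℝ) - 1) * φ = -φ by ring, add_zero, Real.sin_zero, Real.sin_neg]
          ring
        · push_cast
          rw [show ((0:ℝ) + 1) * T = T by ring, show ((0:ℝ) + 1) * φ = φ by ring,
            show (0:ℝ) * φ = 0 by ring, Real.sin_zero]
          ring
      | succ k ih =>
        obtain ⟨ih1, ih2⟩ := ih
        refine ⟨by push_cast at ih2 ⊢; ring_nf at ih2 ⊢; exact ih2, ?_⟩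
        push_cast at ih1 ih2 ⊢
        have hA := hurec (k : ℝ)
        have hD : Real.sin (((k:ℝ) + 2) * φ) = b * Real.sin (((k:ℝ) + 1) * φ)
            - Real.sin ((k:ℝ) * φ) := by
          have h := trig (((k:ℝ) + 1) * φ)
          rw [show ((k:ℝ) + 1) * φ + φ = ((k:ℝ) + 2) * φ by ring,
            show ((k:ℝ) + 1) * φ - φ = (k:ℝ) * φ by ring] at h
          linarith
        have hE : Real.sin (((k:ℝ) + 1) * φ) = b * Real.sin ((k:ℝ) * φ)
            - Real.sin (((k:ℝ) - 1) * φ) := by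
          have h := trig ((k:ℝ) * φ)
          rw [show (k:ℝ) * φ + φ = ((k:ℝ) + 1) * φ by ring,
            show (k:ℝ) * φ - φ = ((k:ℝ) - 1) * φ by ring] at h
          linarith
        calc ξ (s + ((k:ℝ) + 1 + 1) * T) * Real.sin φ
            = (b * ξ (s + ((k:ℝ) + 1) * T) - ξ (s + (k:ℝ) * T)) * Real.sin φ := by
              rw [show ((k:ℝ) + 1 + 1) = ((k:ℝ) + 2) by ring, hurec (k:ℝ)]
          _ = b * (ξ (s + ((k:ℝ) + 1) * T) * Real.sin φ)
              - ξ (s + (k:ℝ) * T) * Real.sin φ := by ring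
          _ = b * (Real.sin (((k:ℝ) + 1) * φ) * ξ (s + T) - Real.sin ((k:ℝ) * φ) * ξ s)
              - (Real.sin ((k:ℝ) * φ) * ξ (s + T) - Real.sin (((k:ℝ) - 1) * φ) * ξ s) := by
              rw [ih2, ih1]
          _ = (b * Real.sin (((k:ℝ) + 1) * φ) - Real.sin ((k:ℝ) * φ)) * ξ (s + T)
              - (b * Real.sin ((k:ℝ) * φ) - Real.sin (((k:ℝ) - 1) * φ)) * ξ s := by ring
          _ = Real.sin (((k:ℝ) + 1 + 1) * φ) * ξ (s + T)
              - Real.sin (((k:ℝ) + 1) * φ) * ξ s := by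
              rw [show ((k:ℝ) + 1 + 1) = ((k:ℝ) + 2) by ring, hD, hE]
      | pred k ih =>
        obtain ⟨ih1, ih2⟩ := ih
        refine ⟨?_, by push_cast at ih1 ⊢; ring_nf at ih1 ⊢; exact ih1⟩
        push_cast at ih1 ih2 ⊢
        have hA : ξ (s + (-(k:ℝ) - 1) * T) = b * ξ (s + (-(k:ℝ)) * T)
            - ξ (s + (-(k:ℝ) + 1) * T) := by
          have h := hurec (-(k:ℝ) - 1)
          rw [show (-(k:ℝ) - 1 + 2) = (-(k:ℝ) + 1) by ring,
            show (-(k:ℝ) - 1 + 1) = (-(k:ℝ)) by ring] at h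
          linarith
        have hD : Real.sin ((-(k:ℝ) - 2) * φ) = b * Real.sin ((-(k:ℝ) - 1) * φ)
            - Real.sin ((-(k:ℝ)) * φ) := by
          have h := trig ((-(k:ℝ) - 1) * φ)
          rw [show (-(k:ℝ) - 1) * φ + φ = (-(k:ℝ)) * φ by ring,
            show (-(k:ℝ) - 1) * φ - φ = (-(k:ℝ) - 2) * φ by ring] at h
          linarith
        have hE : Real.sin ((-(k:ℝ) + 1) * φ) = b * Real.sin ((-(k:ℝ)) * φ)
            - Real.sin ((-(k:ℝ) - 1) * φ) := by
          have h := trig ((-(k:ℝ)) * φ)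
          rw [show (-(k:ℝ)) * φ + φ = (-(k:ℝ) + 1) * φ by ring,
            show (-(k:ℝ)) * φ - φ = (-(k:ℝ) - 1) * φ by ring] at h
          linarith
        calc ξ (s + (-(k:ℝ) - 1) * T) * Real.sin φ
            = (b * ξ (s + (-(k:ℝ)) * T) - ξ (s + (-(k:ℝ) + 1) * T)) * Real.sin φ := by
              rw [hA]
          _ = b * (ξ (s + (-(k:ℝ)) * T) * Real.sin φ)
              - ξ (s + (-(k:ℝ) + 1) * T) * Real.sin φ := by ring
          _ = b * (Real.sin ((-(k:ℝ)) * φ) * ξ (s + T) - Real.sin ((-(k:ℝ) - 1) * φ) * ξ s)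
              - (Real.sin ((-(k:ℝ) + 1) * φ) * ξ (s + T) - Real.sin ((-(k:ℝ)) * φ) * ξ s) := by
              rw [ih1, ih2]
          _ = (b * Real.sin ((-(k:ℝ)) * φ) - Real.sin ((-(k:ℝ) + 1) * φ)) * ξ (s + T)
              - (b * Real.sin ((-(k:ℝ) - 1) * φ) - Real.sin ((-(k:ℝ)) * φ)) * ξ s := by ring
          _ = Real.sin ((-(k:ℝ) - 1) * φ) * ξ (s + T)
              - Real.sin ((-(k:ℝ) - 1 - 1) * φ) * ξ s := by
              rw [show (-(k:ℝ) - 1 - 1) = (-(k:ℝ) - 2) by ring, hD, hE]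
              ring
    intro k
    exact (main k).1
  obtain ⟨M, hM⟩ := (isCompact_Icc : IsCompact (Icc (0:ℝ) (2 * T))).exists_bound_of_continuousOn
    hcont.continuousOn
  have hM' : ∀ y ∈ Icc (0:ℝ) (2 * T), |ξ y| ≤ M := by
    intro y hy
    have := hM y hy
    rwa [Real.norm_eq_abs] at this
  refine ⟨2 * M / Real.sin φ, ?_⟩
  intro t
  set k : ℤ := ⌊t / T⌋ with hk
  set s : ℝ := t - k * T with hs
  have hs0 : 0 ≤ s := by
    rw [hs]
    have h1 : (k : ℝ) ≤ t / T := Int.floor_le _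
    have h2 : (k : ℝ) * T ≤ t := by
      rw [← div_mul_cancel₀ t (ne_of_gt hT)]
      exact mul_le_mul_of_nonneg_right h1 hT.le
    linarith
  have hs1 : s < T := by
    rw [hs]
    have h1 : t / T < (k : ℝ) + 1 := Int.lt_floor_add_one _
    have h2 : t < ((k : ℝ) + 1) * T := by
      rw [← div_mul_cancel₀ t (ne_of_gt hT)]
      exact mul_lt_mul_of_pos_right h1 hT
    nlinarith
  have hts : t = s + k * T := by rw [hs]; ring
  have hkey := key s k
  rw [← hts] at hkey
  have hMs : |ξ s| ≤ M := hM' s ⟨hs0, by linarith⟩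
  have hMsT : |ξ (s + T)| ≤ M := hM' (s + T) ⟨by linarith, by linarith⟩
  have habs : |ξ t| * Real.sin φ ≤ 2 * M := by
    have h1 : |ξ t * Real.sin φ| = |ξ t| * Real.sin φ := by
      rw [abs_mul, abs_of_pos hsinφ]
    rw [← h1, hkey]
    calc |Real.sin (k * φ) * ξ (s + T) - Real.sin ((k - 1) * φ) * ξ s|
        ≤ |Real.sin (k * φ) * ξ (s + T)| + |Real.sin ((k - 1) * φ) * ξ s| := abs_sub _ _
      _ ≤ |ξ (s + T)| + |ξ s| := by
          rw [abs_mul, abs_mul]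
          have h2 := Real.abs_sin_le_one ((k:ℝ) * φ)
          have h3 := Real.abs_sin_le_one (((k:ℝ) - 1) * φ)
          have h4 := abs_nonneg (ξ (s + T))
          have h5 := abs_nonneg (ξ s)
          nlinarith
      _ ≤ 2 * M := by linarith
  exact (le_div_iff₀ hsinφ).2 habs

end StabilityCor2

open Real StabilityCor2

/-- **Stability for small energies (Corollary 2 of the paper).**
There exists `Ē > 0`, depending only on `μ, λ₁, λ₂`, such that whenever the
energy `μ²x₀²/2 ≤ Ē`, every twice differentiable solution of the linearized
Mathieu equations `ξ'' + (λᵢ² + x₀² cos²(μt))ξ = 0` (`i = 1, 2`) is bounded. -/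
theorem stability_small_energy
    (μ lam1 lam2 : ℝ) (hμ : 0 < μ) (hlam1 : 0 < lam1) (hlam2 : 0 < lam2) :
    ∃ Ebar : ℝ, 0 < Ebar ∧
      ∀ x₀ : ℝ, μ ^ 2 * x₀ ^ 2 / 2 ≤ Ebar →
        ∀ lam : ℝ, (lam = lam1 ∨ lam = lam2) →
          ∀ ξ : ℝ → ℝ, Differentiable ℝ ξ → Differentiable ℝ (deriv ξ) →
            (∀ t : ℝ, deriv (deriv ξ) t
              + (lam ^ 2 + x₀ ^ 2 * (Real.cos (μ * t)) ^ 2) * ξ t = 0) →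
            ∃ C : ℝ, ∀ t : ℝ, |ξ t| ≤ C := by
  classical
  have hgap : ∀ lam : ℝ, 0 < lam → 0 < μ ^ 2 * ((⌊lam / μ⌋₊ : ℝ) + 1) ^ 2 - lam ^ 2 := by
    intro lam hlam
    have h := Nat.lt_floor_add_one (lam / μ)
    have h2 : lam < ((⌊lam / μ⌋₊ : ℝ) + 1) * μ := by
      rw [div_lt_iff₀ hμ] at h
      linarith
    nlinarith
  have hg1p := hgap lam1 hlam1
  have hg2p := hgap lam2 hlam2
  set g1 : ℝ := μ ^ 2 * ((⌊lam1 / μ⌋₊ : ℝ) + 1) ^ 2 - lam1 ^ 2 with hg1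
  set g2 : ℝ := μ ^ 2 * ((⌊lam2 / μ⌋₊ : ℝ) + 1) ^ 2 - lam2 ^ 2 with hg2
  refine ⟨μ ^ 2 / 4 * min g1 g2, mul_pos (by positivity) (lt_min hg1p hg2p), ?_⟩
  intro x₀ hE lam hlam12 ξ hd1 hd2 heqn
  have hlam : 0 < lam := by rcases hlam12 with h | h <;> rw [h] <;> assumption
  have hx2 : x₀ ^ 2 ≤ min g1 g2 / 2 := by
    have hμ2 : (0:ℝ) < μ ^ 2 := by positivity
    nlinarith [hE]
  have hsmall : lam ^ 2 + x₀ ^ 2 < μ ^ 2 * ((⌊lam / μ⌋₊ : ℝ) + 1) ^ 2 := by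
    rcases hlam12 with h | h
    · subst h
      have h2 := min_le_left g1 g2
      have h3 : x₀ ^ 2 < g1 := by linarith
      rw [hg1] at h3
      linarith
    · subst h
      have h2 := min_le_right g1 g2
      have h3 : x₀ ^ 2 < g2 := by linarith
      rw [hg2] at h3
      linarith
  clear hx2 hg1 hg2 hg1p hg2p hE hgap hlam12
  set T : ℝ := π / μ with hTdef
  have hT : 0 < T := div_pos Real.pi_pos hμ
  have hψ : IsSol (fun t => lam ^ 2 + x₀ ^ 2 * Real.cos (μ * t) ^ 2) ξ := by
    refine ⟨hd1, hd2, fun t => ?_⟩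
    have := heqn t
    show deriv (deriv ξ) t = -((lam ^ 2 + x₀ ^ 2 * Real.cos (μ * t) ^ 2) * ξ t)
    linarith
  have hPb : ∀ t, |lam ^ 2 + x₀ ^ 2 * Real.cos (μ * t) ^ 2| ≤ lam ^ 2 + x₀ ^ 2 := by
    intro t
    have h1 : Real.cos (μ * t) ^ 2 ≤ 1 := Real.cos_sq_le_one _
    have h2 : (0:ℝ) ≤ x₀ ^ 2 * Real.cos (μ * t) ^ 2 := by positivity
    rw [abs_of_nonneg (by positivity)]
    nlinarith [sq_nonneg x₀]
  -- trivial solution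
  by_cases htriv : ξ 0 = 0 ∧ deriv ξ 0 = 0
  · refine ⟨0, fun t => ?_⟩
    rw [hψ.eq_zero hPb 0 htriv.1 htriv.2 t]
    simp
  -- constant-coefficient case
  by_cases hx : x₀ = 0
  · subst hx
    have hE' : ∀ t, HasDerivAt (fun t => deriv ξ t ^ 2 + lam ^ 2 * ξ t ^ 2) 0 t := by
      intro t
      have hx1 : HasDerivAt ξ (deriv ξ t) t := (hd1 t).hasDerivAt
      have hx2 : HasDerivAt (deriv ξ) (deriv (deriv ξ) t) t := (hd2 t).hasDerivAt
      have h1 : HasDerivAt (fun t => deriv ξ t ^ 2)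
          (2 * deriv ξ t ^ 1 * deriv (deriv ξ) t) t := hx2.pow 2
      have h2 : HasDerivAt (fun t => ξ t ^ 2) (2 * ξ t ^ 1 * deriv ξ t) t := hx1.pow 2
      have h3 := h1.add (h2.const_mul (lam ^ 2))
      have heq2 := heqn t
      have hval : 2 * deriv ξ t ^ 1 * deriv (deriv ξ) t
          + lam ^ 2 * (2 * ξ t ^ 1 * deriv ξ t) = 0 := by
        have h4 : deriv (deriv ξ) t = -(lam ^ 2 * ξ t) := by nlinarith [heq2]
        rw [h4]; ring
      rw [hval] at h3
      exact h3
    have hconst : ∀ t, deriv ξ t ^ 2 + lam ^ 2 * ξ t ^ 2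
        = deriv ξ 0 ^ 2 + lam ^ 2 * ξ 0 ^ 2 := by
      intro t
      exact is_const_of_deriv_eq_zero (fun s => (hE' s).differentiableAt)
        (fun s => (hE' s).deriv) t 0
    set E0 : ℝ := deriv ξ 0 ^ 2 + lam ^ 2 * ξ 0 ^ 2 with hE0
    refine ⟨Real.sqrt (E0 / lam ^ 2), fun t => ?_⟩
    have h1 : lam ^ 2 * ξ t ^ 2 ≤ E0 := by
      have h2 := hconst t
      nlinarith [sq_nonneg (deriv ξ t)]
    have h3 : ξ t ^ 2 ≤ E0 / lam ^ 2 := by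
      rw [le_div_iff₀ (by positivity : (0:ℝ) < lam ^ 2)]
      linarith
    calc |ξ t| = Real.sqrt (ξ t ^ 2) := (Real.sqrt_sq_eq_abs _).symm
      _ ≤ Real.sqrt (E0 / lam ^ 2) := Real.sqrt_le_sqrt h3
  -- main case
  have hnt : ∃ t₁, ξ t₁ ≠ 0 := by
    by_contra hcc
    push_neg at hcc
    apply htriv
    refine ⟨hcc 0, ?_⟩
    have hfun : ξ = fun _ => 0 := funext hcc
    rw [hfun]
    simp
  have hper : ∀ t : ℝ, lam ^ 2 + x₀ ^ 2 * Real.cos (μ * (t + T)) ^ 2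
      = lam ^ 2 + x₀ ^ 2 * Real.cos (μ * t) ^ 2 := by
    intro t
    have harg : μ * (t + T) = μ * t + π := by
      rw [hTdef]; field_simp
    rw [harg, Real.cos_add, Real.cos_pi, Real.sin_pi]
    ring
  have hη : IsSol (fun t => lam ^ 2 + x₀ ^ 2 * Real.cos (μ * t) ^ 2)
      (fun t => ξ (t + T)) := hψ.shift T hper
  have hζ : IsSol (fun t => lam ^ 2 + x₀ ^ 2 * Real.cos (μ * t) ^ 2)
      (fun t => ξ (t + 2 * T)) := by
    apply hψ.shift (2 * T)
    intro t
    rw [show t + 2 * T = (t + T) + T by ring, hper (t + T), hper t]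
  have hdη : deriv (fun t => ξ (t + T)) = fun t => deriv ξ (t + T) :=
    funext fun t => deriv_comp_add_const ξ T t
  -- the Wronskian G
  have hG : ∀ t, HasDerivAt
      (fun t => ξ t * deriv (fun t => ξ (t + T)) t - deriv ξ t * ξ (t + T)) 0 t := by
    intro t
    have h := wronskian_hasDerivAt hψ hη t
    have h0 : ((fun t => lam ^ 2 + x₀ ^ 2 * Real.cos (μ * t) ^ 2) t
        - (fun t => lam ^ 2 + x₀ ^ 2 * Real.cos (μ * t) ^ 2) t)
        * (ξ t * (fun t => ξ (t + T)) t) = 0 := by ring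
    rwa [h0] at h
  set G : ℝ → ℝ := fun t => ξ t * deriv (fun t => ξ (t + T)) t - deriv ξ t * ξ (t + T)
    with hGdef
  have hGconst : ∀ t, G t = G 0 := fun t =>
    is_const_of_deriv_eq_zero (fun s => (hG s).differentiableAt)
      (fun s => (hG s).deriv) t 0
  have hGval : ∀ t, G t = ξ t * deriv ξ (t + T) - deriv ξ t * ξ (t + T) := by
    intro t
    rw [hGdef]
    simp only [hdη]
  have hG0 : G 0 = ξ 0 * deriv ξ T - deriv ξ 0 * ξ T := by
    rw [hGval 0, zero_add]
  by_cases hW0 : G 0 = 0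
  -- Floquet case
  · exfalso
    rw [hG0] at hW0
    obtain ⟨ρ, hρξ, hρξ'⟩ : ∃ ρ : ℝ, ξ T = ρ * ξ 0 ∧ deriv ξ T = ρ * deriv ξ 0 := by
      by_cases hc : ξ 0 = 0
      · have hd0 : deriv ξ 0 ≠ 0 := fun h => htriv ⟨hc, h⟩
        have h5 : deriv ξ 0 * ξ T = 0 := by rw [hc] at hW0; linarith
        have hT0 : ξ T = 0 := by
          rcases mul_eq_zero.1 h5 with h | h
          · exact absurd h hd0
          · exact h
        exact ⟨deriv ξ T / deriv ξ 0, by rw [hT0, hc, mul_zero], by field_simp⟩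
      · refine ⟨ξ T / ξ 0, by field_simp, ?_⟩
        field_simp
        linarith [hW0]
    have hflo : ∀ t, ξ (t + T) = ρ * ξ t := by
      have hχ : IsSol (fun t => lam ^ 2 + x₀ ^ 2 * Real.cos (μ * t) ^ 2)
          (fun t => (-ρ) * ξ t + 1 * ξ (t + T)) := hψ.combo hη (-ρ) 1
      have hdχ : deriv (fun t => (-ρ) * ξ t + 1 * ξ (t + T))
          = fun t => (-ρ) * deriv ξ t + 1 * deriv (fun t => ξ (t + T)) t :=
        deriv_combo _ _ hψ.diff hη.diff
      have h0 : (-ρ) * ξ 0 + 1 * ξ (0 + T) = 0 := by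
        rw [zero_add, hρξ]; ring
      have h0' : deriv (fun t => (-ρ) * ξ t + 1 * ξ (t + T)) 0 = 0 := by
        rw [hdχ]
        show (-ρ) * deriv ξ 0 + 1 * deriv (fun t => ξ (t + T)) 0 = 0
        rw [hdη]
        show (-ρ) * deriv ξ 0 + 1 * deriv ξ (0 + T) = 0
        rw [zero_add, hρξ']; ring
      have hzero := hχ.eq_zero hPb 0 h0 h0'
      intro t
      have h2 : (-ρ) * ξ t + 1 * ξ (t + T) = 0 := hzero t
      linarith
    have hρ0 : ρ ≠ 0 := by
      intro h0
      subst h0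
      have h1 : ξ T = 0 := by rw [hρξ]; ring
      have h2 : deriv ξ T = 0 := by rw [hρξ']; ring
      obtain ⟨t₁, ht₁⟩ := hnt
      exact ht₁ (hψ.eq_zero hPb T h1 h2 t₁)
    rw [hTdef] at hflo
    exact no_floquet hμ hlam hx hsmall hψ hρ0 hflo hnt
  -- independent case
  · rw [hG0] at hW0
    set D : ℝ := ξ 0 * deriv ξ T - deriv ξ 0 * ξ T with hDdef
    set a : ℝ := (ξ (2 * T) * deriv ξ T - deriv ξ (2 * T) * ξ T) / D with hadef
    set b : ℝ := (ξ 0 * deriv ξ (2 * T) - deriv ξ 0 * ξ (2 * T)) / D with hbdef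
    have hζval : ∀ t, ξ (t + 2 * T) = a * ξ t + b * ξ (t + T) := by
      have hχ : IsSol (fun t => lam ^ 2 + x₀ ^ 2 * Real.cos (μ * t) ^ 2)
          (fun t => a * ξ t + b * ξ (t + T)) := hψ.combo hη a b
      have hσ : IsSol (fun t => lam ^ 2 + x₀ ^ 2 * Real.cos (μ * t) ^ 2)
          (fun t => (-1) * (a * ξ t + b * ξ (t + T)) + 1 * ξ (t + 2 * T)) :=
        hχ.combo hζ (-1) 1
      have hdχ : deriv (fun t => a * ξ t + b * ξ (t + T))
          = fun t => a * deriv ξ t + b * deriv (fun t => ξ (t + T)) t :=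
        deriv_combo _ _ hψ.diff hη.diff
      have hdσ : deriv (fun t => (-1) * (a * ξ t + b * ξ (t + T)) + 1 * ξ (t + 2 * T))
          = fun t => (-1) * deriv (fun t => a * ξ t + b * ξ (t + T)) t
            + 1 * deriv (fun t => ξ (t + 2 * T)) t :=
        deriv_combo _ _ hχ.diff hζ.diff
      have hdζ2 : deriv (fun t => ξ (t + 2 * T)) = fun t => deriv ξ (t + 2 * T) :=
        funext fun t => deriv_comp_add_const ξ (2 * T) t
      have h0 : (-1) * (a * ξ 0 + b * ξ (0 + T)) + 1 * ξ (0 + 2 * T) = 0 := by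
        rw [zero_add, zero_add, hadef, hbdef]
        field_simp
        ring
      have h0' : deriv (fun t => (-1) * (a * ξ t + b * ξ (t + T)) + 1 * ξ (t + 2 * T)) 0
          = 0 := by
        rw [hdσ]
        show (-1) * deriv (fun t => a * ξ t + b * ξ (t + T)) 0
          + 1 * deriv (fun t => ξ (t + 2 * T)) 0 = 0
        rw [hdχ, hdζ2]
        show (-1) * (a * deriv ξ 0 + b * deriv (fun t => ξ (t + T)) 0)
          + 1 * deriv ξ (0 + 2 * T) = 0
        rw [hdη]
        show (-1) * (a * deriv ξ 0 + b * deriv ξ (0 + T)) + 1 * deriv ξ (0 + 2 * T) = 0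
        rw [zero_add, zero_add, hadef, hbdef]
        field_simp
        ring
      have hzero := hσ.eq_zero hPb 0 h0 h0'
      intro t
      have h2 : (-1) * (a * ξ t + b * ξ (t + T)) + 1 * ξ (t + 2 * T) = 0 := hzero t
      linarith
    have hGT : ξ T * deriv ξ (2 * T) - deriv ξ T * ξ (2 * T) = D := by
      have h1 := hGconst T
      rw [hGval T, hG0, show T + T = 2 * T by ring] at h1
      rw [h1, hDdef]
    have ha : a = -1 := by
      rw [hadef]
      have hnum : ξ (2 * T) * deriv ξ T - deriv ξ (2 * T) * ξ T = -D := by linarith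
      rw [hnum]
      field_simp
    have hrec : ∀ t, ξ (t + 2 * T) = b * ξ (t + T) - ξ t := by
      intro t
      have := hζval t
      rw [ha] at this
      linarith
    clear_value D a b
    clear hζval ha hGT hGconst hGval hG hG0 heqn hζ htriv hnt hPb hper
    clear hadef hbdef
    have hb : b ^ 2 < 4 := by
      by_contra hbc
      push_neg at hbc
      set sq : ℝ := Real.sqrt (b ^ 2 / 4 - 1) with hsqdef
      have hsq2 : sq ^ 2 = b ^ 2 / 4 - 1 := Real.sq_sqrt (by linarith)
      set ρ : ℝ := b / 2 + sq with hρdef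
      set ρ' : ℝ := b / 2 - sq with hρ'def
      have hρρ' : ρ * ρ' = 1 := by
        rw [hρdef, hρ'def]
        linear_combination (-1 : ℝ) * hsq2
      have hbρ : b - ρ' = ρ := by rw [hρdef, hρ'def]; ring
      have hψfl : IsSol (fun t => lam ^ 2 + x₀ ^ 2 * Real.cos (μ * t) ^ 2)
          (fun t => (-ρ') * ξ t + 1 * ξ (t + T)) := hψ.combo hη (-ρ') 1
      have hflo2 : ∀ t, (-ρ') * ξ (t + T) + 1 * ξ ((t + T) + T)
          = ρ * ((-ρ') * ξ t + 1 * ξ (t + T)) := by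
        intro t
        rw [show (t + T) + T = t + 2 * T by ring, hrec t]
        linear_combination ξ (t + T) * hbρ - ξ t * hρρ' - 2 * ξ t * hsq2
      have hntψ : ∃ t₁, (-ρ') * ξ t₁ + 1 * ξ (t₁ + T) ≠ 0 := by
        by_contra hcc
        push_neg at hcc
        have hfun : (fun t => ξ (t + T)) = fun t => ρ' * ξ t := by
          funext t
          have := hcc t
          linarith
        apply hW0
        have h1 : ξ T = ρ' * ξ 0 := by
          have := hcc 0
          rw [zero_add] at this
          linarith
        have h2 : deriv ξ T = ρ' * deriv ξ 0 := by
          have h3 : deriv (fun t => ξ (t + T)) 0 = deriv (fun t => ρ' * ξ t) 0 := by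
            rw [hfun]
          rw [hdη] at h3
          rw [deriv_const_mul ρ' (hd1 0)] at h3
          have h4 : deriv ξ (0 + T) = ρ' * deriv ξ 0 := h3
          rwa [zero_add] at h4
        rw [hDdef, h1, h2]
        ring
      have hρ0' : ρ ≠ 0 := by
        intro h0
        rw [h0, zero_mul] at hρρ'
        exact one_ne_zero hρρ'.symm
      have hfloψ : ∀ t, ((fun t => (-ρ') * ξ t + 1 * ξ (t + T)) (t + π / μ))
          = ρ * ((fun t => (-ρ') * ξ t + 1 * ξ (t + T)) t) := by
        intro t
        have := hflo2 t
        rw [← hTdef]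
        exact this
      exact no_floquet hμ hlam hx hsmall hψfl hρ0' hfloψ hntψ
    exact bounded_of_rec hψ.cont hT hb hrec
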